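/- Let $\gamma' \geq 0$ be a real number and let $i \geq 1$ be an integer. Define $L_{i0} = 1$ and, for $1 \le j \le i$, $L_{ij} = \binom{i}{j} \frac{\prod_{k=0}^{j-1}(i+\gamma'-k)}{\prod_{k=1}^{j}(k+\gamma')}$, set $R_{ij} = \sum_{k=0}^{j} L_{ik}$, $R_i = R_{ii}$, and for $0 \le r \le i-1$ define $F(i,r) = \dfrac{R_{ir}\,(R_i - R_{ir})}{(i-r)(i-r+\gamma')\,L_{ir}}$. Then for every integer $0 \le r \le i-1$, $F(i,r) = F(i,i-r-1)$. -/

import Mathlib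

open Finset

/-- The regularizing coefficients `L_{ij}` (even-dimension case):
`L_{i0} = 1` and for `j ≥ 1`,
`L_{ij} = binom(i,j) ⬝ (∏_{k=0}^{j-1} (i+γ'-k)) / (∏_{k=1}^{j} (k+γ'))`.
(For `j = 0` both products are empty, yielding `1`.) -/
noncomputable def Lcoef (γ : ℝ) (i j : ℕ) : ℝ :=
  (i.choose j : ℝ) * (∏ k ∈ Finset.range j, ((i : ℝ) + γ - (k : ℝ))) /
    ∏ k ∈ Finset.Icc 1 j, ((k : ℝ) + γ)

/-- The partial sums `R_{ij} = ∑_{k=0}^{j} L_{ik}`. -/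
noncomputable def Rcoef (γ : ℝ) (i j : ℕ) : ℝ :=
  ∑ k ∈ Finset.range (j + 1), Lcoef γ i k

/-- `F(i,r) = R_{ir}(R_i - R_{ir}) / ((i-r)(i-r+γ') L_{ir})`. -/
noncomputable def Fquot (γ : ℝ) (i r : ℕ) : ℝ :=
  Rcoef γ i r * (Rcoef γ i i - Rcoef γ i r) /
    (((i : ℝ) - (r : ℝ)) * ((i : ℝ) - (r : ℝ) + γ) * Lcoef γ i r)

lemma Ppos (γ : ℝ) (hγ : 0 ≤ γ) (j : ℕ) :
    0 < ∏ k ∈ Finset.Icc 1 j, ((k : ℝ) + γ) := by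
  apply Finset.prod_pos
  intro k hk
  have h1 : 1 ≤ k := (Finset.mem_Icc.mp hk).1
  have : (1:ℝ) ≤ (k:ℝ) := by exact_mod_cast h1
  linarith

lemma prod_split (γ : ℝ) (i : ℕ) : ∀ j, j ≤ i →
    (∏ k ∈ Finset.Icc 1 i, ((k : ℝ) + γ)) =
      (∏ k ∈ Finset.Icc 1 (i - j), ((k : ℝ) + γ)) *
        ∏ k ∈ Finset.range j, ((i : ℝ) + γ - (k : ℝ)) := by
  intro j
  induction j with
  | zero => simp
  | succ n ih =>
    intro h
    rw [Finset.prod_range_succ, ih (by omega)]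
    have h2 : i - n = (i - (n+1)) + 1 := by omega
    rw [h2, Finset.prod_Icc_succ_top (by omega)]
    have h3 : ((i - (n+1) + 1 : ℕ) : ℝ) = (i : ℝ) - (n : ℝ) := by
      have : (((i - (n+1)) : ℕ) : ℝ) = (i:ℝ) - ((n:ℝ)+1) := by
        rw [Nat.cast_sub (by omega)]; push_cast; ring
      push_cast [this]; ring
    rw [h3]; ring

lemma Lcoef_eq (γ : ℝ) (hγ : 0 ≤ γ) (i j : ℕ) (hj : j ≤ i) :
    Lcoef γ i j = (i.choose j : ℝ) * (∏ k ∈ Finset.Icc 1 i, ((k:ℝ)+γ)) /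
      ((∏ k ∈ Finset.Icc 1 (i-j), ((k:ℝ)+γ)) * ∏ k ∈ Finset.Icc 1 j, ((k:ℝ)+γ)) := by
  have hQ : (∏ k ∈ Finset.range j, ((i : ℝ) + γ - (k : ℝ))) =
      (∏ k ∈ Finset.Icc 1 i, ((k:ℝ)+γ)) / (∏ k ∈ Finset.Icc 1 (i-j), ((k:ℝ)+γ)) := by
    rw [eq_div_iff (Ppos γ hγ (i-j)).ne']
    linear_combination - prod_split γ i j hj
  rw [Lcoef, hQ]; ring

lemma Lsymm (γ : ℝ) (hγ : 0 ≤ γ) (i j : ℕ) (hj : j ≤ i) :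
    Lcoef γ i (i - j) = Lcoef γ i j := by
  rw [Lcoef_eq γ hγ i (i-j) (by omega), Lcoef_eq γ hγ i j hj,
    Nat.sub_sub_self hj, Nat.choose_symm hj]
  ring

lemma Lrec (γ : ℝ) (hγ : 0 ≤ γ) (i r : ℕ) (hr : r + 1 ≤ i) :
    ((r:ℝ)+1) * ((r:ℝ)+1+γ) * Lcoef γ i (r+1)
      = ((i:ℝ)-(r:ℝ)) * ((i:ℝ)-(r:ℝ)+γ) * Lcoef γ i r := by
  have hc : (i.choose (r+1) : ℝ) * ((r:ℝ)+1) = (i.choose r : ℝ) * ((i:ℝ)-(r:ℝ)) := by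
    have h := Nat.choose_succ_right_eq i r
    have h2 : ((i.choose (r+1) * (r+1) : ℕ) : ℝ) = ((i.choose r * (i-r) : ℕ) : ℝ) := by
      exact_mod_cast congrArg (Nat.cast : ℕ → ℝ) h
    push_cast [Nat.cast_sub (show r ≤ i by omega)] at h2
    linarith [h2]
  rw [Lcoef, Lcoef, Finset.prod_range_succ,
    Finset.prod_Icc_succ_top (show 1 ≤ r+1 by omega)]
  have hP := (Ppos γ hγ r).ne'
  push_cast
  rw [← mul_div_assoc, ← mul_div_assoc, div_eq_div_iff (by positivity) hP]
  linear_combination (((r:ℝ)+1+γ) * ((i:ℝ)+γ-(r:ℝ)) *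
    (∏ k ∈ Finset.range r, ((i:ℝ)+γ-(k:ℝ))) *
    (∏ k ∈ Finset.Icc 1 r, ((k:ℝ)+γ))) * hc

lemma Rflip (γ : ℝ) (hγ : 0 ≤ γ) (i r : ℕ) (hi : 1 ≤ i) (hr : r ≤ i - 1) :
    Rcoef γ i (i - r - 1) = Rcoef γ i i - Rcoef γ i r := by
  have key : Rcoef γ i r + Rcoef γ i (i - r - 1) = Rcoef γ i i := by
    unfold Rcoef
    have h1 : i - r - 1 + 1 = i - r := by omega
    rw [h1]
    have h2 : (∑ k ∈ Finset.range (i - r), Lcoef γ i k)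
        = ∑ k ∈ Finset.range (i - r), Lcoef γ i (r + 1 + (i - r - 1 - k)) := by
      apply Finset.sum_congr rfl
      intro k hk
      have hk' : k < i - r := Finset.mem_range.mp hk
      rw [show r + 1 + (i - r - 1 - k) = i - k by omega]
      exact (Lsymm γ hγ i k (by omega)).symm
    have h4 : (∑ k ∈ Finset.range (i - r), Lcoef γ i (r + 1 + (i - r - 1 - k)))
        = ∑ k ∈ Finset.range (i - r), Lcoef γ i (r + 1 + k) := by
      exact Finset.sum_range_reflect (fun k => Lcoef γ i (r + 1 + k)) (i - r)
    have h5 : (∑ k ∈ Finset.range (i - r), Lcoef γ i (r + 1 + k))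
        = ∑ k ∈ Finset.Ico (r+1) (i+1), Lcoef γ i k := by
      rw [Finset.sum_Ico_eq_sum_range, show i + 1 - (r+1) = i - r by omega]
    rw [h2, h4, h5, Finset.range_eq_Ico, Finset.range_eq_Ico]
    exact Finset.sum_Ico_consecutive (Lcoef γ i) (show 0 ≤ r + 1 by omega) (show r + 1 ≤ i + 1 by omega)
  linarith [key]

theorem Fquot_symm (γ : ℝ) (hγ : 0 ≤ γ) (i : ℕ) (hi : 1 ≤ i) :
    ∀ r : ℕ, r ≤ i - 1 → Fquot γ i r = Fquot γ i (i - r - 1) := by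
  intro r hr
  have hr1 : r + 1 ≤ i := by omega
  have hR := Rflip γ hγ i r hi hr
  have hL : Lcoef γ i (i - r - 1) = Lcoef γ i (r+1) := by
    rw [show i - r - 1 = i - (r+1) by omega]
    exact Lsymm γ hγ i (r+1) hr1
  have hcast : ((i - r - 1 : ℕ) : ℝ) = (i:ℝ) - (r:ℝ) - 1 := by
    rw [show i - r - 1 = i - (r+1) by omega, Nat.cast_sub hr1]; push_cast; ring
  unfold Fquot
  rw [hR, hL, hcast, ← Lrec γ hγ i r hr1]
  have e1 : (i:ℝ) - ((i:ℝ) - (r:ℝ) - 1) = (r:ℝ)+1 := by ring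
  rw [e1]
  congr 1
  ring
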